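/- Let S be a real symmetric positive definite matrix whose largest eigenvalue satisfies λ_max ≤ 2 - λ_min (where λ_min is the smallest eigenvalue) and λ_min ≤ 1. Then the spectral condition number of T = 2S - S² is at most that of S: λ_max(T)/λ_min(T) ≤ λ_max(S)/λ_min(S). -/

import Mathlib

theorem stmt_10 (n : ℕ) (S : Matrix (Fin n) (Fin n) ℝ) (hS : S.IsSymm)
    (hSpd : S.PosDef)
    (hmax : sSup (spectrum ℝ S) ≤ 2 - sInf (spectrum ℝ S))
    (hmin : sInf (spectrum ℝ S) ≤ 1) :
    sSup (spectrum ℝ (2 • S - S * S)) / sInf (spectrum ℝ (2 • S - S * S)) ≤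
      sSup (spectrum ℝ S) / sInf (spectrum ℝ S) := by
  rcases Nat.eq_zero_or_pos n with hn | hn
  · subst hn
    have h1 : spectrum ℝ S = ∅ :=
      Set.eq_empty_of_forall_notMem fun x hx =>
        (spectrum.mem_iff.mp hx) (isUnit_of_subsingleton _)
    have h2 : spectrum ℝ (2 • S - S * S) = ∅ :=
      Set.eq_empty_of_forall_notMem fun x hx =>
        (spectrum.mem_iff.mp hx) (isUnit_of_subsingleton _)
    simp [h1, h2]
  · have hH := hSpd.isHermitian
    have hSA : IsSelfAdjoint S := hH
    have hfin : (spectrum ℝ S).Finite := S.finite_real_spectrum (𝕜 := ℝ)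
    have hne : (spectrum ℝ S).Nonempty := by
      rw [Matrix.IsHermitian.spectrum_real_eq_range_eigenvalues hH]
      exact Set.range_nonempty _ (h := ⟨⟨0, hn⟩⟩)
    set a := sInf (spectrum ℝ S) with ha_def
    set b := sSup (spectrum ℝ S) with hb_def
    have haMem : a ∈ spectrum ℝ S := hne.csInf_mem hfin
    have hbMem : b ∈ spectrum ℝ S := hne.csSup_mem hfin
    have hposAll : ∀ x ∈ spectrum ℝ S, 0 < x := by
      intro x hx
      rw [Matrix.IsHermitian.spectrum_real_eq_range_eigenvalues hH] at hx
      obtain ⟨i, rfl⟩ := hx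
      exact hSpd.eigenvalues_pos i
    have ha_pos : 0 < a := hposAll a haMem
    have hbounds : ∀ x ∈ spectrum ℝ S, a ≤ x ∧ x ≤ b := fun x hx =>
      ⟨csInf_le hfin.bddBelow hx, le_csSup hfin.bddAbove hx⟩
    have hab : a ≤ b := (hbounds a haMem).2
    -- functional calculus
    have hT : cfc (fun x : ℝ => 2 * x - x ^ 2) S = 2 • S - S * S := by
      rw [cfc_sub (fun x : ℝ => 2 * x) (fun x : ℝ => x ^ 2) S,
        cfc_const_mul (2 : ℝ) (fun x : ℝ => x) S, cfc_id' (R := ℝ) S,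
        cfc_pow_id (R := ℝ) S 2, sq]
      norm_num [two_smul]
    have hmap : spectrum ℝ (2 • S - S * S) = (fun x : ℝ => 2 * x - x ^ 2) '' spectrum ℝ S := by
      rw [← hT]
      exact cfc_map_spectrum _ S
    -- bounds on image
    have himgfin : ((fun x : ℝ => 2 * x - x ^ 2) '' spectrum ℝ S).Finite := hfin.image _
    have himgne : ((fun x : ℝ => 2 * x - x ^ 2) '' spectrum ℝ S).Nonempty := hne.image _
    have hlow : ∀ y ∈ (fun x : ℝ => 2 * x - x ^ 2) '' spectrum ℝ S, a * (2 - a) ≤ y := by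
      rintro y ⟨x, hx, rfl⟩
      obtain ⟨hax, hxb⟩ := hbounds x hx
      show a * (2 - a) ≤ 2 * x - x ^ 2
      nlinarith [mul_nonneg (sub_nonneg.mpr hax) (show (0:ℝ) ≤ 2 - a - x by linarith)]
    have hhigh : ∀ y ∈ (fun x : ℝ => 2 * x - x ^ 2) '' spectrum ℝ S, y ≤ b * (2 - a) := by
      rintro y ⟨x, hx, rfl⟩
      obtain ⟨hax, hxb⟩ := hbounds x hx
      have hx_pos := hposAll x hx
      show 2 * x - x ^ 2 ≤ b * (2 - a)
      nlinarith [mul_nonneg (sub_nonneg.mpr hxb) (show (0:ℝ) ≤ 2 - a - x by linarith),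
        mul_nonneg hx_pos.le (sub_nonneg.mpr hab)]
    have hInf : sInf ((fun x : ℝ => 2 * x - x ^ 2) '' spectrum ℝ S) = a * (2 - a) := by
      apply le_antisymm
      · apply csInf_le himgfin.bddBelow
        refine ⟨a, haMem, by ring⟩
      · exact le_csInf himgne hlow
    have hSup : sSup ((fun x : ℝ => 2 * x - x ^ 2) '' spectrum ℝ S) ≤ b * (2 - a) :=
      csSup_le himgne hhigh
    rw [hmap, hInf]
    have h2a : 0 < 2 - a := by linarith
    calc sSup ((fun x : ℝ => 2 * x - x ^ 2) '' spectrum ℝ S) / (a * (2 - a))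
        ≤ (b * (2 - a)) / (a * (2 - a)) := by
          apply div_le_div_of_nonneg_right hSup (by positivity) |>.trans_eq rfl
      _ = b / a := mul_div_mul_right b a (ne_of_gt h2a)
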